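/- Let F : ℂ[X] → ℂ be a linear functional with F(1) = 1, and suppose there exists r > 0 such that F((X - α)^n) ≠ 0 for all n ≥ 1 and all α ∈ ℂ with |α| ≥ r. Then F(X^k) = (F(X))^k for every natural number k. -/

import Mathlib

open Polynomial Finset

lemma multiset_newton (s : Multiset ℂ) (k : ℕ) :
    (k : ℂ) * s.esymm k = (-1)^(k+1) *
      ∑ a ∈ (Finset.HasAntidiagonal.antidiagonal k).filter (fun a => a.1 < k),
        (-1)^a.1 * s.esymm a.1 * (s.map (· ^ a.2)).sum := by
  obtain ⟨l, rfl⟩ := Quot.exists_rep s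
  have h := congrArg (MvPolynomial.aeval l.get) (MvPolynomial.mul_esymm_eq_sum (Fin l.length) ℂ k)
  have huniv : (Finset.univ.val.map l.get) = (⟦l⟧ : Multiset ℂ) := by
    rw [Fin.univ_val_map, List.ofFn_get]; rfl
  simp only [map_mul, map_pow, map_natCast, map_sum, map_neg, map_one,
    MvPolynomial.aeval_esymm_eq_multiset_esymm, MvPolynomial.psum, MvPolynomial.aeval_X,
    huniv] at h
  convert h using 3 with a ha
  congr 1
  congr 1
  show _ = (Finset.univ.val.map (fun x : Fin l.length => l.get x ^ a.2)).sum
  rw [show (fun x : Fin l.length => l.get x ^ a.2) = (fun x : ℂ => x ^ a.2) ∘ l.get from rfl,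
    ← Multiset.map_map, huniv]
  rfl

lemma multiset_prod_norm_le (t : Multiset ℂ) (R : ℝ) (hR : 0 ≤ R)
    (h : ∀ z ∈ t, ‖z‖ ≤ R) : ‖t.prod‖ ≤ R ^ Multiset.card t := by
  induction t using Multiset.induction with
  | empty => simp
  | cons a t ih =>
    rw [Multiset.prod_cons, Multiset.card_cons, pow_succ']
    exact (norm_mul a t.prod).le.trans (mul_le_mul (h a (Multiset.mem_cons_self a t))
      (ih fun z hz => h z (Multiset.mem_cons_of_mem hz)) (norm_nonneg _) hR)

lemma esymm_norm_le (s : Multiset ℂ) (R : ℝ) (hR : 0 ≤ R)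
    (h : ∀ z ∈ s, ‖z‖ ≤ R) (j : ℕ) :
    ‖s.esymm j‖ ≤ ((Multiset.card s).choose j : ℝ) * R ^ j := by
  rw [Multiset.esymm]
  refine (norm_multiset_sum_le _).trans ?_
  rw [Multiset.map_map]
  have hb : ∀ x ∈ (s.powersetCard j).map (fun t => ‖Multiset.prod t‖), x ≤ R ^ j := by
    intro x hx
    obtain ⟨t, ht, rfl⟩ := Multiset.mem_map.mp hx
    have hcard := (Multiset.mem_powersetCard.mp ht).2
    have hle := (Multiset.mem_powersetCard.mp ht).1
    rw [← hcard]
    exact multiset_prod_norm_le t R hR fun z hz => h z (Multiset.mem_of_le hle hz)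
  have := Multiset.sum_le_card_nsmul _ _ hb
  rwa [Multiset.card_map, Multiset.card_powersetCard, nsmul_eq_mul] at this

lemma psum_norm_le (s : Multiset ℂ) (R : ℝ) (hR : 0 ≤ R)
    (h : ∀ z ∈ s, ‖z‖ ≤ R) (i : ℕ) :
    ‖(s.map (· ^ i)).sum‖ ≤ (Multiset.card s : ℝ) * R ^ i := by
  refine (norm_multiset_sum_le _).trans ?_
  rw [Multiset.map_map]
  have hb : ∀ x ∈ s.map (fun z => ‖z ^ i‖), x ≤ R ^ i := by
    intro x hx
    obtain ⟨z, hz, rfl⟩ := Multiset.mem_map.mp hx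
    rw [norm_pow]
    exact pow_le_pow_left₀ (norm_nonneg z) (h z hz) i
  have := Multiset.sum_le_card_nsmul _ _ hb
  rwa [Multiset.card_map, nsmul_eq_mul] at this

lemma exists_roots_data (F : Polynomial ℂ →ₗ[ℂ] ℂ) (hF1 : F 1 = 1) (r : ℝ)
    (hF : ∀ n : ℕ, 1 ≤ n → ∀ α : ℂ, r ≤ ‖α‖ → F ((X - C α) ^ n) ≠ 0)
    (n : ℕ) (hn : 1 ≤ n) :
    ∃ s : Multiset ℂ, Multiset.card s = n ∧ (∀ z ∈ s, ‖z‖ < r) ∧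
      ∀ j, j ≤ n → s.esymm j = (n.choose j : ℂ) * F (X ^ j) := by
  set p : Polynomial ℂ :=
    ∑ m ∈ range (n+1), C ((n.choose m : ℂ) * (-1)^(n-m) * F (X^(n-m))) * X^m with hp
  have hcoeff : ∀ k, k ≤ n → p.coeff k = (n.choose k : ℂ) * (-1)^(n-k) * F (X^(n-k)) := by
    intro k hk
    rw [hp, finset_sum_coeff]
    simp only [coeff_C_mul_X_pow]
    rw [Finset.sum_ite_eq (range (n+1)) k]
    simp [Nat.lt_succ_of_le hk]
  have heval : ∀ α : ℂ, p.eval α = (-1)^n * F ((X - C α)^n) := by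
    intro α
    have hexp : (X - C α)^n
        = ∑ m ∈ range (n+1), (((-1)^(m+n) * α^(n-m) * (n.choose m)) : ℂ) • X^m := by
      rw [sub_pow]
      refine Finset.sum_congr rfl fun m hm => ?_
      rw [smul_eq_C_mul]
      simp only [map_mul, map_pow, map_neg, map_one, map_natCast]
      ring
    rw [hexp, map_sum, Finset.mul_sum]
    simp only [map_smul, smul_eq_mul]
    rw [hp]
    rw [eval_finset_sum]
    simp only [eval_mul, eval_C, eval_pow, eval_X]
    rw [← Finset.sum_range_reflect]
    refine Finset.sum_congr rfl fun m hm => ?_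
    rw [Finset.mem_range, Nat.lt_succ_iff] at hm
    simp only [Nat.add_sub_cancel]
    rw [Nat.sub_sub_self hm, Nat.choose_symm hm]
    have h2 : (-1 : ℂ)^n * (-1)^n = 1 := by
      rw [← pow_add, ← two_mul, pow_mul, neg_one_sq, one_pow]
    linear_combination (-((n.choose m : ℂ) * F (X ^ m) * α ^ (n - m) * (-1)^m)) * h2
  have hdegle : p.natDegree ≤ n := by
    rw [hp]
    refine natDegree_sum_le_of_forall_le _ _ fun m hm => ?_
    exact (natDegree_C_mul_X_pow_le _ _).trans (Nat.lt_succ_iff.mp (Finset.mem_range.mp hm))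
  have hcoeffn : p.coeff n = 1 := by
    rw [hcoeff n le_rfl]
    simp [hF1]
  have hmonic : p.Monic := monic_of_natDegree_le_of_coeff_eq_one n hdegle hcoeffn
  have hdeg : p.natDegree = n :=
    le_antisymm hdegle (le_natDegree_of_ne_zero (by rw [hcoeffn]; exact one_ne_zero))
  have hsplits : p.Splits := IsAlgClosed.splits p
  have hcard : Multiset.card p.roots = n := by
    rw [(splits_iff_card_roots).mp hsplits, hdeg]
  refine ⟨p.roots, hcard, ?_, ?_⟩
  · intro z hz
    by_contra hzr
    push_neg at hzr
    have hroot : p.eval z = 0 := (Polynomial.mem_roots hmonic.ne_zero).mp hz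
    rw [heval z] at hroot
    exact hF n hn z hzr (by
      have := hroot
      field_simp at this
      exact (mul_eq_zero.mp this).resolve_left (pow_ne_zero _ (by norm_num)))
  · intro j hj
    have hkey := Polynomial.coeff_eq_esymm_roots_of_splits hsplits
      (show n - j ≤ p.natDegree by rw [hdeg]; omega)
    rw [hmonic.leadingCoeff, one_mul, hdeg, Nat.sub_sub_self hj,
      hcoeff (n - j) (Nat.sub_le n j), Nat.sub_sub_self hj, Nat.choose_symm hj] at hkey
    have hne : ((-1 : ℂ)^j) ≠ 0 := pow_ne_zero _ (by norm_num)
    apply mul_left_cancel₀ hne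
    rw [← hkey]
    ring

lemma multiset_esymm_one (s : Multiset ℂ) : s.esymm 1 = s.sum := by
  rw [Multiset.esymm, Multiset.powersetCard_one, Multiset.map_map]
  simp

lemma gkz_center (F : Polynomial ℂ →ₗ[ℂ] ℂ) (hF1 : F 1 = 1) (r : ℝ) (hr : 0 < r)
    (hF : ∀ n : ℕ, 1 ≤ n → ∀ α : ℂ, r ≤ ‖α‖ → F ((X - C α) ^ n) ≠ 0)
    (hX : F X = 0) : ∀ k, 1 ≤ k → F (X ^ k) = 0 := by
  intro k hk
  set K : ℝ := (k+1) * k.factorial * 2^k * r^k with hK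
  have key : ∀ n : ℕ, 2*k ≤ n → ‖F (X^k)‖ ≤ K / n := by
    intro n hn
    have hn1 : 1 ≤ n := by omega
    have hkn : k ≤ n := by omega
    obtain ⟨s, hcard, hlt, hsym⟩ := exists_roots_data F hF1 r hF n hn1
    have hle : ∀ z ∈ s, ‖z‖ ≤ r := fun z hz => (hlt z hz).le
    have hsum1 : s.sum = 0 := by
      have h1 := hsym 1 hn1
      rw [multiset_esymm_one] at h1
      rw [h1, pow_one, hX, mul_zero]
    have hterm : ∀ a ∈ (Finset.HasAntidiagonal.antidiagonal k).filter (fun a => a.1 < k),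
        ‖(-1:ℂ)^a.1 * s.esymm a.1 * (s.map (· ^ a.2)).sum‖ ≤ (n:ℝ)^(k-1) * r^k := by
      intro a ha
      rw [Finset.mem_filter, Finset.HasAntidiagonal.mem_antidiagonal] at ha
      by_cases h1 : a.1 = k - 1
      · have h2 : a.2 = 1 := by omega
        have hz : (s.map (· ^ a.2)).sum = 0 := by
          rw [h2]
          simpa [pow_one] using hsum1
        rw [hz, mul_zero, norm_zero]
        positivity
      · have ha1 : a.1 + 1 ≤ k - 1 := by omega
        calc ‖(-1:ℂ)^a.1 * s.esymm a.1 * (s.map (· ^ a.2)).sum‖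
            = ‖s.esymm a.1‖ * ‖(s.map (· ^ a.2)).sum‖ := by
              rw [norm_mul, norm_mul, norm_pow, norm_neg, norm_one, one_pow, one_mul]
          _ ≤ ((n.choose a.1 : ℝ) * r^a.1) * ((n:ℝ) * r^a.2) := by
              refine mul_le_mul ?_ ?_ (norm_nonneg _) (by positivity)
              · simpa [hcard] using esymm_norm_le s r hr.le hle a.1
              · simpa [hcard] using psum_norm_le s r hr.le hle a.2
          _ ≤ ((n:ℝ)^a.1 * r^a.1) * ((n:ℝ) * r^a.2) := by
              gcongr
              exact_mod_cast Nat.choose_le_pow n a.1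
          _ = (n:ℝ)^(a.1+1) * r^(a.1+a.2) := by ring
          _ ≤ (n:ℝ)^(k-1) * r^k := by
              rw [ha.1]
              exact mul_le_mul_of_nonneg_right
                (pow_le_pow_right₀ (by exact_mod_cast hn1) ha1) (by positivity)
    have hnewton := multiset_newton s k
    have hnorm : (k:ℝ) * ‖s.esymm k‖
        ≤ ((k+1):ℝ) * ((n:ℝ)^(k-1) * r^k) := by
      have e1 : ‖(k:ℂ) * s.esymm k‖ = (k:ℝ) * ‖s.esymm k‖ := by
        rw [norm_mul, Complex.norm_natCast]
      rw [← e1, hnewton, norm_mul, norm_pow, norm_neg, norm_one, one_pow, one_mul]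
      refine (norm_sum_le _ _).trans ?_
      calc ∑ a ∈ (Finset.HasAntidiagonal.antidiagonal k).filter (fun a => a.1 < k),
            ‖(-1:ℂ)^a.1 * s.esymm a.1 * (s.map (· ^ a.2)).sum‖
          ≤ ∑ _a ∈ (Finset.HasAntidiagonal.antidiagonal k).filter (fun a => a.1 < k),
            ((n:ℝ)^(k-1) * r^k) := Finset.sum_le_sum hterm
        _ = (((Finset.HasAntidiagonal.antidiagonal k).filter (fun a => a.1 < k)).card : ℝ)
            * ((n:ℝ)^(k-1) * r^k) := by rw [Finset.sum_const, nsmul_eq_mul]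
        _ ≤ ((k+1):ℝ) * ((n:ℝ)^(k-1) * r^k) := by
            refine mul_le_mul_of_nonneg_right ?_ (by positivity)
            exact_mod_cast (Finset.card_filter_le _ _).trans
                (le_of_eq (Finset.Nat.card_antidiagonal k))
    -- substitute esymm k
    have hek := hsym k hkn
    have hesn : ‖s.esymm k‖ = (n.choose k : ℝ) * ‖F (X^k)‖ := by
      rw [hek, norm_mul, Complex.norm_natCast]
    rw [hesn] at hnorm
    -- drop factor k
    have h4 : (n.choose k : ℝ) * ‖F (X^k)‖ ≤ ((k+1):ℝ) * ((n:ℝ)^(k-1) * r^k) := by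
      have hk1 : (1:ℝ) ≤ (k:ℝ) := by exact_mod_cast hk
      nlinarith [norm_nonneg (F (X^k)), mul_nonneg (Nat.cast_nonneg (n.choose k) : (0:ℝ) ≤ n.choose k) (norm_nonneg (F (X^k)))]
    -- lower bound choose
    have h5 : ((n:ℝ)/2)^k / k.factorial ≤ (n.choose k : ℝ) := by
      refine le_trans ?_ (Nat.pow_le_choose k n)
      have hbase : (n:ℝ)/2 ≤ ((n + 1 - k : ℕ) : ℝ) := by
        have hcast : ((n + 1 - k : ℕ) : ℝ) = (n:ℝ) + 1 - k := by
          have hkn1 : k ≤ n + 1 := by omega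
          push_cast [Nat.cast_sub hkn1]
          ring
        rw [hcast]
        have hk2 : (k:ℝ) ≤ (n:ℝ)/2 := by
          rw [le_div_iff₀ (by norm_num)]
          exact_mod_cast (by omega : k*2 ≤ n)
        linarith
      have hfact : (0:ℝ) < k.factorial := by exact_mod_cast k.factorial_pos
      exact (div_le_div_iff_of_pos_right hfact).mpr
        (pow_le_pow_left₀ (by positivity) hbase k)
    have hN : (0:ℝ) < n := by exact_mod_cast Nat.pos_of_ne_zero (by omega)
    have h6 : ((n:ℝ)/2)^k / k.factorial * ‖F (X^k)‖ ≤ ((k+1):ℝ) * ((n:ℝ)^(k-1) * r^k) :=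
      le_trans (mul_le_mul_of_nonneg_right h5 (norm_nonneg _)) h4
    rw [le_div_iff₀ hN]
    have hnk1 : (0:ℝ) < (n:ℝ)^(k-1) := pow_pos hN _
    have hpow : (n:ℝ)^k = (n:ℝ)^(k-1) * n := by
      rw [← pow_succ]
      congr 1
      omega
    rw [div_pow, hpow] at h6
    rw [hK, ← mul_le_mul_iff_of_pos_left hnk1]
    have hfact : (0:ℝ) < k.factorial := by exact_mod_cast k.factorial_pos
    calc (n:ℝ)^(k-1) * (‖F (X^k)‖ * n)
        = (((n:ℝ)^(k-1)*n)/2^k/(k.factorial:ℝ) * ‖F (X^k)‖) * (2^k * k.factorial) := by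
          field_simp
      _ ≤ (((k:ℝ)+1) * ((n:ℝ)^(k-1) * r^k)) * (2^k*(k.factorial:ℝ)) :=
          mul_le_mul_of_nonneg_right h6 (by positivity)
      _ = (n:ℝ)^(k-1) * (((k:ℝ)+1) * (k.factorial:ℝ) * 2^k * r^k) := by ring
  have h0 : ‖F (X^k)‖ ≤ 0 :=
    ge_of_tendsto (tendsto_const_div_atTop_nhds_zero_nat K)
      (Filter.eventually_atTop.mpr ⟨2*k, key⟩)
  exact norm_le_zero_iff.mp h0

/-- Multiplicativity on monomials: under the GKZ hypotheses, F(X^k) = (F X)^k. -/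
theorem gkz_monomials (F : Polynomial ℂ →ₗ[ℂ] ℂ) (hF1 : F 1 = 1)
    (r : ℝ) (hr : 0 < r)
    (hF : ∀ n : ℕ, 1 ≤ n → ∀ α : ℂ, r ≤ ‖α‖ → F ((X - C α) ^ n) ≠ 0) :
    ∀ k : ℕ, F (X ^ k) = (F X) ^ k := by
  intro k
  set γ : ℂ := F X with hγ
  set T : Polynomial ℂ →ₐ[ℂ] Polynomial ℂ := Polynomial.aeval (X - C γ) with hT
  set G : Polynomial ℂ →ₗ[ℂ] ℂ := F ∘ₗ T.toLinearMap with hG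
  have hTapp : ∀ q, G q = F (T q) := fun q => rfl
  have hG1 : G 1 = 1 := by
    rw [hTapp, map_one, hF1]
  have hGX : G X = 0 := by
    rw [hTapp, hT, aeval_X]
    have : (X - C γ : Polynomial ℂ) = X - γ • 1 := by
      rw [smul_eq_C_mul, mul_one]
    rw [this, map_sub, map_smul, hF1, smul_eq_mul, mul_one, ← hγ, sub_self]
  have hGF : ∀ n, 1 ≤ n → ∀ α : ℂ, r + ‖γ‖ ≤ ‖α‖ → G ((X - C α)^n) ≠ 0 := by
    intro n hn α hα
    have hTn : T ((X - C α)^n) = (X - C (γ + α))^n := by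
      rw [map_pow, map_sub, aeval_X, aeval_C]
      rw [Polynomial.algebraMap_eq, map_add]
      ring
    rw [hTapp, hTn]
    refine hF n hn (γ + α) ?_
    calc r = (r + ‖γ‖) - ‖γ‖ := by ring
      _ ≤ ‖α‖ - ‖γ‖ := by linarith
      _ ≤ ‖γ + α‖ := by
          have := norm_add_le (γ + α) (-γ)
          simp only [add_neg_cancel_comm, norm_neg] at this
          linarith
  have hzero := gkz_center G hG1 (r + ‖γ‖) (by positivity) hGF hGX
  have hTk : T ((X + C γ)^k) = X^k := by
    rw [map_pow, map_add, aeval_X, aeval_C]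
    rw [Polynomial.algebraMap_eq]
    ring
  have hFk : F (X^k) = G ((X + C γ)^k) := by rw [hTapp, hTk]
  rw [hFk, add_pow, map_sum]
  have hterm : ∀ m ∈ range (k+1),
      G (X^m * (C γ)^(k-m) * (k.choose m : Polynomial ℂ)) =
        (γ^(k-m) * (k.choose m : ℂ)) * G (X^m) := by
    intro m _
    have : X^m * (C γ)^(k-m) * (k.choose m : Polynomial ℂ)
        = (γ^(k-m) * (k.choose m : ℂ)) • X^m := by
      rw [smul_eq_C_mul]
      simp only [map_mul, map_pow, map_natCast]
      ring
    rw [this, map_smul, smul_eq_mul]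
  rw [Finset.sum_congr rfl hterm]
  rw [Finset.sum_eq_single 0]
  · simp [hG1]
  · intro m hm hm0
    rw [hzero m (Nat.one_le_iff_ne_zero.mpr hm0), mul_zero]
  · intro h
    exact absurd (Finset.mem_range.mpr (Nat.succ_pos k)) h
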